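/- arXiv:0903.2926 — 4 statements merged into one kernel-verified Lean document; each statement's English description precedes it below -/
import Mathlib

section
/- Let P(X) = X³ − kX² + lX − 1 be a polynomial with integer coefficients k, l. Then P has a double real root X₀ if and only if X₀ = 1 (in which case P(X) = X³ − 3X² + 3X − 1) or X₀ = −1 (in which case P(X) = X³ + X² − X − 1). -/
open Polynomial

lemma key_aux (k l : ℤ) (t : ℝ)
    (e1 : (t^3 - k*t^2 + l*t - 1 : ℝ) = 0)
    (e2 : (3*t^2 - 2*k*t + l : ℝ) = 0) :
    (k = 3 ∧ l = 3 ∧ t = 1) ∨ (k = -1 ∧ l = -1 ∧ t = -1) := by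
  have eA : t^3 - (l:ℝ)*t + 2 = 0 := by linear_combination (-2)*e1 + t*e2
  have eB : (k:ℝ)*t^2 - 2*l*t + 3 = 0 := by linear_combination (-3)*e1 + t*e2
  have eT : t*((k:ℝ)^2*(l:ℝ) + 3*k - 4*l^2) = 2*(k:ℝ)^2 - 6*l := by
    linear_combination (2*(k:ℝ)^2 - 3*k*t - 6*l)*e1 + ((k:ℝ)*t^2 + 2*l*t - (k:ℝ)^2*t)*e2
  by_cases hD : (k:ℤ)^2*l + 3*k - 4*l^2 = 0
  · have hN : 2*(k:ℤ)^2 - 6*l = 0 := by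
      by_contra hN
      have hD' : ((k:ℝ)^2*(l:ℝ) + 3*k - 4*l^2) = 0 := by exact_mod_cast hD
      rw [hD', mul_zero] at eT
      have : (2*(k:ℤ)^2 - 6*l : ℝ) = 0 := by linarith [eT]
      exact hN (by exact_mod_cast this)
    have hk2 : k^2 = 3*l := by linarith
    have hl2 : l^2 = 3*k := by nlinarith [hD, hk2]
    have hk4 : k*(k^3 - 27) = 0 := by nlinarith [hk2, hl2]
    rcases mul_eq_zero.mp hk4 with hk0 | hk3
    · have hl0 : l = 0 := by nlinarith [hk2]
      rw [hk0, hl0] at eB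
      norm_num at eB
    · have hk : k = 3 := by nlinarith [sq_nonneg (k-3), sq_nonneg (k+3), hk3]
      have hl : l = 3 := by nlinarith [hk2, hk]
      left
      refine ⟨hk, hl, ?_⟩
      rw [hk, hl] at eB
      have h2 : (t - 1)^2 = 0 := by push_cast at eB; nlinarith [eB]
      have := pow_eq_zero_iff (n := 2) (by norm_num) |>.mp h2
      linarith [this]
  · have hDr : ((k:ℝ)^2*(l:ℝ) + 3*k - 4*l^2) ≠ 0 := by
      intro h
      exact hD (by exact_mod_cast h)
    set q : ℚ := (2*(k:ℚ)^2 - 6*l) / ((k:ℚ)^2*l + 3*k - 4*l^2) with hq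
    have hqt : (q:ℝ) = t := by
      rw [hq]
      push_cast
      field_simp
      rw [div_eq_iff (by intro h; apply hDr; linear_combination h)]
      linear_combination -eT
    have hroot : q^3 - (l:ℚ)*q + 2 = 0 := by
      have : ((q^3 - (l:ℚ)*q + 2 : ℚ) : ℝ) = 0 := by push_cast [hqt]; linarith [eA]
      exact_mod_cast this
    have hint : IsIntegral ℤ q := by
      refine ⟨X^3 - C l * X + C 2, ?_, ?_⟩
      · monicity!
      · simp only [eval₂_sub, eval₂_add, eval₂_mul, eval₂_pow, eval₂_X, eval₂_C]
        simp only [algebraMap_int_eq, eq_intCast]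
        push_cast
        linear_combination hroot
    obtain ⟨n, hn⟩ := IsIntegrallyClosed.isIntegral_iff.mp hint
    have hnt : (n:ℝ) = t := by
      rw [← hqt]
      exact_mod_cast congrArg (fun x : ℚ => (x:ℝ)) hn
    have hA : n^3 - l*n + 2 = 0 := by
      have : ((n^3 - l*n + 2 : ℤ) : ℝ) = 0 := by push_cast [hnt]; linarith [eA]
      exact_mod_cast this
    have hB : k*n^2 - 2*l*n + 3 = 0 := by
      have : ((k*n^2 - 2*l*n + 3 : ℤ) : ℝ) = 0 := by push_cast [hnt]; linarith [eB]
      exact_mod_cast this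
    have hdvd : n ∣ 2 := ⟨l - n^2, by linarith [hA, mul_comm n (l - n^2)] ; ⟩
    have hn0 : n ≠ 0 := by rintro rfl; simp at hA
    have hub : n ≤ 2 := Int.le_of_dvd (by norm_num) hdvd
    have hlb : -2 ≤ n := by
      have : -n ≤ 2 := Int.le_of_dvd (by norm_num) (Int.neg_dvd.mpr hdvd)
      linarith
    interval_cases n <;> [norm_num at hA hB hnt; norm_num at hA hB hnt; simp at hA; norm_num at hA hB hnt; norm_num at hA hB hnt]
    · omega
    · right
      have hl : l = -1 := by omega
      have hk : k = -1 := by omega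
      exact ⟨hk, hl, by linarith [hnt]⟩
    · left
      have hl : l = 3 := by omega
      have hk : k = 3 := by omega
      exact ⟨hk, hl, by linarith [hnt]⟩
    · omega

/-- For `P(X) = X³ − kX² + lX − 1` with integer coefficients, `P` has a double real
root `X₀` if and only if `X₀ = 1` (and then `P = X³ − 3X² + 3X − 1`) or `X₀ = −1`
(and then `P = X³ + X² − X − 1`). -/
theorem stmt_2 (k l : ℤ) (X₀ : ℝ) :
    ((X - C X₀) ^ 2 ∣
        (X ^ 3 - C (k : ℝ) * X ^ 2 + C (l : ℝ) * X - 1 : Polynomial ℝ)) ↔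
      (X₀ = 1 ∧
        (X ^ 3 - C (k : ℝ) * X ^ 2 + C (l : ℝ) * X - 1 : Polynomial ℝ) =
          X ^ 3 - C 3 * X ^ 2 + C 3 * X - 1) ∨
      (X₀ = -1 ∧
        (X ^ 3 - C (k : ℝ) * X ^ 2 + C (l : ℝ) * X - 1 : Polynomial ℝ) =
          X ^ 3 + X ^ 2 - X - 1) := by
  constructor
  · intro h
    obtain ⟨Q, hQ⟩ := h
    have e1 : (X₀^3 - k*X₀^2 + l*X₀ - 1 : ℝ) = 0 := by
      have := congrArg (eval X₀) hQ
      simp at this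
      linarith [this]
    have e2 : (3*X₀^2 - 2*k*X₀ + l : ℝ) = 0 := by
      have := congrArg (fun p => eval X₀ (derivative p)) hQ
      simp [derivative_mul, derivative_pow] at this
      linarith [this]
    rcases key_aux k l X₀ e1 e2 with ⟨hk, hl, ht⟩ | ⟨hk, hl, ht⟩
    · left
      refine ⟨ht, ?_⟩
      rw [hk, hl]
      push_cast
      ring
    · right
      refine ⟨ht, ?_⟩
      rw [hk, hl]
      push_cast [map_neg, map_one]
      ring
  · rintro (⟨h1, hP⟩ | ⟨h1, hP⟩) <;> subst h1 <;> rw [hP]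
    · exact ⟨X - C 1, by simp [map_ofNat]; ring⟩
    · exact ⟨X - C 1, by simp; ring⟩
end

section
/- Let P(X) = X⁴ − mX³ + pX² − nX + 1 with m, n, p ∈ ℤ. If P has a complex root of multiplicity greater than 1, then the multiset of roots of P equals {1, 1, a, a⁻¹}, {−1, −1, a, a⁻¹}, {a, a⁻¹, a, a⁻¹}, or {a, −a⁻¹, a, −a⁻¹} for some a ∈ ℂ. -/
open Polynomial

lemma quad_roots (q : ℂ[X]) (hq : q.Monic) (hd : q.natDegree = 2) :
    ∃ a b : ℂ, q.roots = {a, b} ∧ a * b = q.coeff 0 := by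
  have hs : q.roots.card = 2 := by
    rw [← hd]
    exact (splits_iff_card_roots.mp (IsAlgClosed.splits q))
  obtain ⟨a, b, hab⟩ := Multiset.card_eq_two.mp hs
  refine ⟨a, b, hab, ?_⟩
  have := prod_multiset_X_sub_C_of_monic_of_roots_card_eq hq (by rw [hs, hd])
  rw [hab] at this
  have h0 : q.coeff 0 = q.eval 0 := by simp [coeff_zero_eq_eval_zero]
  rw [h0, ← this]
  simp [Multiset.prod_cons]

lemma ms_aux1 (c a b : ℂ) : (2 • ({c} : Multiset ℂ)) + {a, b} = {c, c, a, b} := by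
  rw [two_nsmul]; rfl

lemma ms_aux2 (a b : ℂ) : (2 • ({a, b} : Multiset ℂ)) = {a, b, a, b} := by
  rw [two_nsmul]; rfl

/-- Let `P(X) = X⁴ − mX³ + pX² − nX + 1` with `m, n, p ∈ ℤ`. If `P` has a complex
root of multiplicity greater than one, then the multiset of complex roots of `P`
is `{1, 1, a, a⁻¹}`, `{−1, −1, a, a⁻¹}`, `{a, a⁻¹, a, a⁻¹}` or
`{a, −a⁻¹, a, −a⁻¹}` for some `a ∈ ℂ`. -/
theorem stmt_3 (m n p : ℤ)
    (P : Polynomial ℂ)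
    (hP : P = X ^ 4 - C (m : ℂ) * X ^ 3 + C (p : ℂ) * X ^ 2 - C (n : ℂ) * X + 1)
    (hmult : ∃ z : ℂ, 1 < P.rootMultiplicity z) :
    ∃ a : ℂ,
      P.roots = {1, 1, a, a⁻¹} ∨
      P.roots = {-1, -1, a, a⁻¹} ∨
      P.roots = {a, a⁻¹, a, a⁻¹} ∨
      P.roots = {a, -a⁻¹, a, -a⁻¹} := by
  obtain ⟨z, hz⟩ := hmult
  set P₀ : ℤ[X] := X ^ 4 - C m * X ^ 3 + C p * X ^ 2 - C n * X + 1 with hP₀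
  have hmap : P₀.map (algebraMap ℤ ℂ) = P := by
    rw [hP, hP₀]
    simp [Polynomial.map_add, Polynomial.map_sub, Polynomial.map_mul, Polynomial.map_pow]
  have hP₀monic : P₀.Monic := by
    rw [hP₀]; monicity!
  have hP₀deg : P₀.natDegree = 4 := by
    rw [hP₀]; compute_degree!
  have hPne : P ≠ 0 := by
    rw [← hmap]
    exact (hP₀monic.map _).ne_zero
  have hdvd2 : (X - C z) ^ 2 ∣ P :=
    dvd_trans (pow_dvd_pow _ hz) (pow_rootMultiplicity_dvd P z)
  have hroot : aeval z P₀ = 0 := by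
    have h1 : (X - C z) ∣ P := dvd_trans (dvd_pow_self _ (by norm_num)) hdvd2
    have h2 : P.eval z = 0 := (dvd_iff_isRoot.mp h1)
    rw [aeval_def, ← eval_map, hmap, h2]
  have hint : IsIntegral ℤ z := ⟨P₀, hP₀monic, hroot⟩
  set μ : ℤ[X] := minpoly ℤ z with hμ
  have hμmonic : μ.Monic := minpoly.monic hint
  obtain ⟨S, hS⟩ := minpoly.isIntegrallyClosed_dvd hint hroot
  -- derivative root
  have hder : aeval z (derivative P₀) = 0 := by
    obtain ⟨T, hT⟩ := hdvd2
    have : (derivative P).eval z = 0 := by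
      rw [hT]
      simp [derivative_mul, derivative_pow]
    rw [aeval_def, ← eval_map, ← derivative_map, hmap, this]
  -- derivative of minpoly nonzero at z
  have hμ'ne : aeval z (derivative μ) ≠ 0 := by
    have hintQ : IsIntegral ℚ z := hint.tower_top
    have heq : minpoly ℚ z = μ.map (algebraMap ℤ ℚ) :=
      minpoly.isIntegrallyClosed_eq_field_fractions' ℚ hint
    have hsep : (minpoly ℚ z).Separable := (minpoly.irreducible hintQ).separable
    obtain ⟨u, v, huv⟩ := hsep
    have happ := congrArg (aeval z) huv
    rw [map_add, map_mul, map_mul, minpoly.aeval, mul_zero, zero_add, map_one] at happ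
    intro h0
    rw [heq, derivative_map] at happ
    rw [aeval_map_algebraMap] at happ
    rw [h0, mul_zero] at happ
    exact one_ne_zero happ.symm
  -- μ² divides P₀
  have hSz : aeval z S = 0 := by
    have h3 : aeval z (derivative μ * S + μ * derivative S) = 0 := by
      rw [← derivative_mul, hμ, ← hS]; exact hder
    rw [map_add, map_mul, map_mul, minpoly.aeval, zero_mul, add_zero] at h3
    exact (mul_eq_zero.mp h3).resolve_left hμ'ne
  obtain ⟨T, hT⟩ := minpoly.isIntegrallyClosed_dvd hint hSz
  have hP₀eq : P₀ = μ ^ 2 * T := by rw [hS, hT]; ring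
  have hTmonic : T.Monic := ((hμmonic.pow 2).of_mul_monic_left (hP₀eq ▸ hP₀monic))
  have hdeg : 2 * μ.natDegree + T.natDegree = 4 := by
    have := hP₀eq ▸ hP₀deg
    rw [(hμmonic.pow 2).natDegree_mul hTmonic, hμmonic.natDegree_pow] at this
    omega
  have hdpos : 0 < μ.natDegree := minpoly.natDegree_pos hint
  -- constant terms
  have hconst : (μ.eval 0) ^ 2 * T.eval 0 = 1 := by
    have := congrArg (eval 0) hP₀eq
    rw [hP₀] at this
    simp [eval_add, eval_sub, eval_mul, eval_pow] at this
    linarith [this]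
  have he : μ.eval 0 = 1 ∨ μ.eval 0 = -1 := by
    have h1 : IsUnit (μ.eval 0) := IsUnit.of_mul_eq_one _ (by linarith [hconst] : μ.eval 0 * (μ.eval 0 * T.eval 0) = 1)
    exact Int.isUnit_iff.mp h1
  have hT0 : T.eval 0 = 1 := by
    rcases he with h | h <;> rw [h] at hconst <;> linarith
  have hd12 : μ.natDegree = 1 ∨ μ.natDegree = 2 := by omega
  -- map to ℂ
  have hPfact : P = (μ.map (algebraMap ℤ ℂ)) ^ 2 * (T.map (algebraMap ℤ ℂ)) := by
    rw [← hmap, hP₀eq]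
    simp [Polynomial.map_mul, Polynomial.map_pow]
  have hμCne : μ.map (algebraMap ℤ ℂ) ≠ 0 := (hμmonic.map _).ne_zero
  have hTCne : T.map (algebraMap ℤ ℂ) ≠ 0 := (hTmonic.map _).ne_zero
  have hroots : P.roots = 2 • (μ.map (algebraMap ℤ ℂ)).roots + (T.map (algebraMap ℤ ℂ)).roots := by
    rw [hPfact, roots_mul (by rw [← hPfact]; exact hPne), roots_pow]
  rcases hd12 with hd | hd
  · -- μ linear, z = ±1
    have hTdeg : T.natDegree = 2 := by omega
    have hμeq : μ = X + C (μ.coeff 0) := hμmonic.eq_X_add_C hd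
    have hc0 : μ.coeff 0 = μ.eval 0 := by simp [coeff_zero_eq_eval_zero]
    obtain ⟨a, b, hab, habm⟩ := quad_roots (T.map (algebraMap ℤ ℂ)) (hTmonic.map _)
      (by rw [hTmonic.natDegree_map, hTdeg])
    have hcT : (T.map (algebraMap ℤ ℂ)).coeff 0 = 1 := by
      simp [coeff_map, coeff_zero_eq_eval_zero, hT0]
    rw [hcT] at habm
    have hane : a ≠ 0 := by rintro rfl; simp at habm
    have hb : b = a⁻¹ := by field_simp at habm ⊢; linear_combination habm
    have hμroots : (μ.map (algebraMap ℤ ℂ)).roots = {-((μ.eval 0 : ℤ) : ℂ)} := by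
      rw [hμeq]
      simp [Polynomial.map_add, hc0]
      rw [← C_eq_intCast, ← sub_neg_eq_add, ← C_neg, roots_X_sub_C]
    rw [hμroots, hab, hb] at hroots
    refine ⟨a, ?_⟩
    rcases he with h | h <;> rw [h] at hroots
    · right; left
      rw [hroots, ms_aux1]; norm_num
    · left
      rw [hroots, ms_aux1]; norm_num
  · -- μ quadratic, T = 1
    have hT1 : T = 1 := hTmonic.natDegree_eq_zero.mp (by omega)
    obtain ⟨a, b, hab, habm⟩ := quad_roots (μ.map (algebraMap ℤ ℂ)) (hμmonic.map _)
      (by rw [hμmonic.natDegree_map, hd])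
    have hcμ : (μ.map (algebraMap ℤ ℂ)).coeff 0 = ((μ.eval 0 : ℤ) : ℂ) := by
      simp [coeff_map, coeff_zero_eq_eval_zero]
    rw [hcμ] at habm
    rw [hT1] at hroots
    simp only [Polynomial.map_one, roots_one, add_zero] at hroots
    rw [hab] at hroots
    refine ⟨a, ?_⟩
    rcases he with h | h <;> rw [h] at habm
    · have hane : a ≠ 0 := by rintro rfl; simp at habm
      have hb : b = a⁻¹ := by
        push_cast at habm
        field_simp at habm ⊢; linear_combination habm
      right; right; left
      rw [hroots, hb, ms_aux2]; simp
    · have hane : a ≠ 0 := by rintro rfl; simp at habm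
      have hb : b = -a⁻¹ := by
        push_cast at habm
        field_simp at habm ⊢; linear_combination habm
      right; right; right
      rw [hroots, hb, ms_aux2]; simp
end

section
/- Let 𝔤 be a finite-dimensional solvable Lie algebra over ℂ with nilradical 𝔫. Then dim 𝔫 ≥ (1/2) dim 𝔤. -/
open Module LieModule LinearMap

universe u v

section
variable {L M : Type*} [LieRing L] [LieAlgebra ℂ L]
  [AddCommGroup M] [Module ℂ M] [LieRingModule L M] [LieModule ℂ L M]
  [FiniteDimensional ℂ M]

lemma trace_key (A : LieSubalgebra ℂ L) (χ : Module.Dual ℂ A)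
    (w : M) (hw : w ≠ 0) (hwe : ∀ a : A, ⁅(a : L), w⁆ = χ a • w)
    (x : L) (hAI : ∀ c : A, ⁅(c : L), x⁆ ∈ A)
    (b : A) (a : A) (hb : (b : L) = ⁅(a : L), x⁆) : χ b = 0 := by
  classical
  set f : Module.End ℂ M := toEnd ℂ L M x with hf
  set act : L → Module.End ℂ M := fun y => toEnd ℂ L M y with hact
  set g : ℕ → M := fun k => (f ^ k) w with hg
  set U : ℕ → Submodule ℂ M := fun k => Submodule.span ℂ (g '' Set.Iio k) with hU
  have hUmono : Monotone U := fun i j hij =>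
    Submodule.span_mono (Set.image_mono (Set.Iio_subset_Iio hij))
  have hgU : ∀ k, g k ∈ U (k + 1) :=
    fun k => Submodule.subset_span ⟨k, by simp, rfl⟩
  have hg0 : g 0 = w := by simp [hg]
  have hgsucc : ∀ k, g (k + 1) = f (g k) := by
    intro k; simp [hg, pow_succ']
  have hU0 : U 0 = ⊥ := by
    have : Set.Iio (0 : ℕ) = (∅ : Set ℕ) := by ext n; simp
    simp [hU, this]
  -- commutation rule
  have hcomm : ∀ (c : A) (v : M), act c (f v) = f (act c v) + act ⁅(c : L), x⁆ v := by
    intro c v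
    have h : act ⁅(c : L), x⁆ = act c * f - f * act c := by
      ext v
      simp only [hact, hf, LinearMap.sub_apply, Module.End.mul_apply, toEnd_apply_apply, lie_lie]
    rw [h]
    simp only [LinearMap.sub_apply, Module.End.mul_apply]
    abel
  -- f maps U k into U (k+1)
  have hfU : ∀ k, Submodule.map f (U k) ≤ U (k + 1) := by
    intro k
    rw [hU, Submodule.map_span]
    refine Submodule.span_le.mpr ?_
    rintro _ ⟨_, ⟨j, hj, rfl⟩, rfl⟩
    exact Submodule.subset_span ⟨j + 1, Nat.succ_lt_succ hj, hgsucc j⟩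
  -- Claim 1
  have claim1 : ∀ k, ∀ c : A, act c (g k) - χ c • g k ∈ U k := by
    intro k
    induction k with
    | zero =>
      intro c
      have h : act c (g 0) = χ c • g 0 := by
        rw [hg0]; exact hwe c
      simp [h]
    | succ k ih =>
      intro c
      set c' : A := ⟨⁅(c : L), x⁆, hAI c⟩ with hc'
      have key : act c (g (k + 1)) - χ c • g (k + 1) =
          f (act c (g k) - χ c • g k) + ((act c' (g k) - χ c' • g k) + χ c' • g k) := by
        rw [hgsucc, hcomm c (g k)]
        have : act (c' : L) = act ⁅(c : L), x⁆ := by rw [hc']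
        rw [this]
        simp only [map_sub, map_smul]
        abel
      rw [key]
      exact Submodule.add_mem _ (hfU k ⟨_, ih c, rfl⟩)
        (Submodule.add_mem _ (hUmono (Nat.le_succ k) (ih c'))
          (Submodule.smul_mem _ _ (hgU k)))
  -- stabilization
  obtain ⟨m, hm⟩ := (monotone_stabilizes_iff_noetherian.mpr inferInstance)
    (⟨U, hUmono⟩ : ℕ →o Submodule ℂ M)
  have hm' : ∀ l, m ≤ l → U m = U l := fun l hl => hm l hl
  have hgUU : ∀ k, g k ∈ U m := by
    intro k
    have h1 : g k ∈ U (max (k + 1) m) :=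
      hUmono (le_max_left _ _) (hgU k)
    rwa [← hm' _ (le_max_right _ _)] at h1
  have hfUU : ∀ v ∈ U m, f v ∈ U m := by
    intro v hv
    have := hfU m ⟨v, hv, rfl⟩
    rwa [← hm' _ (Nat.le_succ m)] at this
  have hactUU : ∀ c : A, ∀ v ∈ U m, act c v ∈ U m := by
    intro c v hv
    have hmap : Submodule.map (act c) (U m) ≤ U m := by
      conv_lhs => rw [hU]
      rw [Submodule.map_span]
      refine Submodule.span_le.mpr ?_
      rintro _ ⟨_, ⟨j, hj, rfl⟩, rfl⟩
      have h1 : act c (g j) = (act c (g j) - χ c • g j) + χ c • g j := by abel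
      rw [h1]
      exact Submodule.add_mem _ (hUmono (le_of_lt hj) (claim1 j c))
        (Submodule.smul_mem _ _ (hgUU j))
    exact hmap ⟨v, hv, rfl⟩
  -- the "strictly triangular" part
  set P : A → Module.End ℂ M := fun c => act c - χ c • 1 with hP
  have hPapp : ∀ (c : A) (v : M), P c v = act c v - χ c • v := by
    intro c v; simp [hP]
  have hP1 : ∀ (c : A) (k : ℕ), Submodule.map (P c) (U k) ≤ U (k - 1) := by
    intro c k
    match k with
    | 0 => rw [hU0]; simp
    | k + 1 =>
      conv_lhs => rw [hU]
      rw [Submodule.map_span]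
      refine Submodule.span_le.mpr ?_
      rintro _ ⟨_, ⟨j, hj, rfl⟩, rfl⟩
      have : (k + 1) - 1 = k := rfl
      rw [this, hPapp]
      exact hUmono (Nat.lt_succ_iff.mp hj) (claim1 j c)
  have hPn : ∀ (c : A) (j k : ℕ), Submodule.map ((P c) ^ j) (U k) ≤ U (k - j) := by
    intro c j
    induction j with
    | zero =>
      intro k
      rw [pow_zero, Module.End.one_eq_id, Submodule.map_id]
      exact hUmono (Nat.sub_le k 0)
    | succ j ih =>
      intro k
      rw [pow_succ, Module.End.mul_eq_comp, Submodule.map_comp]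
      have h1 : Submodule.map ((P c) ^ j) (Submodule.map (P c) (U k))
          ≤ U (k - 1 - j) :=
        le_trans (Submodule.map_mono (hP1 c k)) (ih (k - 1))
      have h2 : k - 1 - j = k - (j + 1) := by omega
      rwa [h2] at h1
  -- restrict to the invariant subspace
  have hwUU : w ∈ U m := hg0 ▸ hgUU 0
  haveI : Nontrivial (U m) := ⟨⟨⟨w, hwUU⟩, 0, by simp [Subtype.ext_iff, hw]⟩⟩
  set Rf : Module.End ℂ (U m) := f.restrict hfUU with hRf
  set Rc : A → Module.End ℂ (U m) := fun c => (act c).restrict (hactUU c) with hRc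
  have hRb : Rc b = Rc a * Rf - Rf * Rc a := by
    ext v
    simp only [hRc, hRf, Module.End.mul_apply, LinearMap.sub_apply, Submodule.coe_sub,
      LinearMap.restrict_coe_apply]
    have h1 := hcomm a (v : M)
    have h2 : act (b : L) = act ⁅(a : L), x⁆ := by rw [hb]
    rw [h2]
    rw [h1]
    abel
  have htrb0 : trace ℂ (U m) (Rc b) = 0 := by
    rw [hRb, map_sub, trace_mul_comm, sub_self]
  have hPUU : ∀ v ∈ U m, P b v ∈ U m := by
    intro v hv
    rw [hPapp]
    exact Submodule.sub_mem _ (hactUU b v hv) (Submodule.smul_mem _ _ hv)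
  have hRsplit : Rc b = χ b • 1 + (P b).restrict hPUU := by
    ext v
    simp only [hRc, LinearMap.add_apply, LinearMap.smul_apply, Module.End.one_apply,
      Submodule.coe_add, Submodule.coe_smul, LinearMap.restrict_coe_apply, hPapp]
    abel
  have hnil : IsNilpotent ((P b).restrict hPUU) := by
    refine ⟨m, ?_⟩
    rw [Module.End.pow_restrict m]
    ext v
    rw [LinearMap.restrict_coe_apply]
    have hv := hPn b m m ⟨(v : M), v.2, rfl⟩
    rw [Nat.sub_self, hU0, Submodule.mem_bot] at hv
    simpa using hv
  have htrb : trace ℂ (U m) (Rc b) = χ b * (finrank ℂ (U m) : ℂ) := by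
    rw [hRsplit, map_add, map_smul, trace_one,
      (isNilpotent_trace_of_isNilpotent hnil).eq_zero, add_zero, smul_eq_mul]
  rw [htrb0] at htrb
  have hfr : (finrank ℂ (U m) : ℂ) ≠ 0 := by
    have h := finrank_pos (R := ℂ) (M := U m)
    have h2 : finrank ℂ (U m) ≠ 0 := Nat.pos_iff_ne_zero.mp h
    exact_mod_cast h2
  exact (mul_eq_zero.mp htrb.symm).resolve_right hfr

lemma lie_triv [Subsingleton L] [Nontrivial M] :
    ∃ (χ : Module.Dual ℂ L) (v : M), v ≠ 0 ∧ ∀ y : L, ⁅y, v⁆ = χ y • v := by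
  obtain ⟨v, hv⟩ := exists_ne (0 : M)
  refine ⟨0, v, hv, fun y => ?_⟩
  have hy : y = 0 := Subsingleton.elim y 0
  simp [hy]
end

theorem lie_aux (n : ℕ) : ∀ (L : Type u) [LieRing L] [LieAlgebra ℂ L]
    [FiniteDimensional ℂ L] [LieAlgebra.IsSolvable L]
    (M : Type v) [AddCommGroup M] [Module ℂ M] [LieRingModule L M] [LieModule ℂ L M]
    [FiniteDimensional ℂ M] [Nontrivial M], Module.finrank ℂ L ≤ n →
    ∃ (χ : Module.Dual ℂ L) (v : M), v ≠ 0 ∧ ∀ y : L, ⁅y, v⁆ = χ y • v := by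
  induction n with
  | zero =>
    intro L _ _ _ _ M _ _ _ _ _ _ hn
    haveI : Subsingleton L := finrank_zero_iff.mp (Nat.le_zero.mp hn)
    exact lie_triv
  | succ n ih =>
    intro L _ _ _ _ M _ _ _ _ _ _ hn
    by_cases h0 : finrank ℂ L = 0
    · haveI : Subsingleton L := finrank_zero_iff.mp h0
      exact lie_triv
    haveI : Nontrivial L := finrank_pos_iff.mp (Nat.pos_of_ne_zero h0)
    -- derived series and a codimension-one ideal
    have hder : ∀ u v : L, ⁅u, v⁆ ∈ LieAlgebra.derivedSeries ℂ L 1 := by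
      intro u v
      rw [LieAlgebra.derivedSeries_def]
      exact LieSubmodule.lie_mem_lie (LieSubmodule.mem_top u) (LieSubmodule.mem_top v)
    have hlt := LieAlgebra.derivedSeries_lt_top_of_solvable ℂ L
    set p : Submodule ℂ L := (LieAlgebra.derivedSeries ℂ L 1).toSubmodule with hp
    obtain ⟨x₀, hx₀⟩ : ∃ x₀ : L, x₀ ∉ p := by
      by_contra h
      push_neg at h
      have : (LieAlgebra.derivedSeries ℂ L 1 : LieIdeal ℂ L) = ⊤ := by
        ext z
        simp only [LieSubmodule.mem_top, iff_true]
        exact h z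
      exact hlt.ne this
    have hquo : (p.mkQ x₀ : L ⧸ p) ≠ 0 := by
      rw [Submodule.mkQ_apply, ne_eq, Submodule.Quotient.mk_eq_zero]
      exact hx₀
    obtain ⟨ψ, hψ⟩ : ∃ ψ : Module.Dual ℂ (L ⧸ p), ψ (p.mkQ x₀) ≠ 0 := by
      by_contra h
      push_neg at h
      exact hquo ((Module.forall_dual_apply_eq_zero_iff ℂ _).mp h)
    set φ : Module.Dual ℂ L := ψ.comp p.mkQ with hφ
    have hφx : φ x₀ ≠ 0 := hψ
    have hpker : ∀ z ∈ LieAlgebra.derivedSeries ℂ L 1, φ z = 0 := by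
      intro z hz
      have hz : z ∈ p := hz
      simp only [hφ, LinearMap.comp_apply, Submodule.mkQ_apply]
      rw [(Submodule.Quotient.mk_eq_zero p).mpr hz, map_zero]
    -- A := ker φ, a Lie ideal of codimension 1
    set A : LieSubalgebra ℂ L :=
      { toSubmodule := LinearMap.ker φ
        lie_mem' := fun {u v} _ _ => by
          show φ ⁅u, v⁆ = 0
          exact hpker _ (hder u v) } with hA
    have hmemA : ∀ z : L, z ∈ A ↔ φ z = 0 := fun z => Iff.rfl
    have hAI : ∀ (y : L) (c : L), c ∈ A → ⁅c, y⁆ ∈ A := by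
      intro y c _
      exact hpker _ (hder c y)
    haveI : LieAlgebra.IsSolvable A :=
      Function.Injective.lieAlgebra_isSolvable (f := A.incl) Subtype.coe_injective
    haveI : FiniteDimensional ℂ A := by
      exact FiniteDimensional.finiteDimensional_submodule (LinearMap.ker φ)
    have hrange : LinearMap.range φ = ⊤ := by
      rw [Submodule.eq_top_iff']
      intro c
      exact ⟨(c / φ x₀) • x₀, by rw [map_smul, smul_eq_mul]; field_simp⟩
    have hfrA : finrank ℂ A ≤ n := by
      have h1 := LinearMap.finrank_range_add_finrank_ker φ
      rw [hrange] at h1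
      have h2 : finrank ℂ (⊤ : Submodule ℂ ℂ) = 1 := by simp
      have h3 : finrank ℂ A = finrank ℂ (LinearMap.ker φ) := rfl
      omega
    -- apply induction hypothesis to A acting on M
    obtain ⟨χ₀, w₀, hw₀, hwe₀⟩ := ih A M hfrA
    have hwe : ∀ a : A, ⁅(a : L), w₀⁆ = χ₀ a • w₀ := by
      intro a
      rw [← LieSubalgebra.coe_bracket_of_module]
      exact hwe₀ a
    -- the common eigenspace W
    set W : Submodule ℂ M :=
      ⨅ (c : A), LinearMap.ker (toEnd ℂ L M (c : L) - χ₀ c • 1) with hW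
    have hmemW : ∀ v : M, v ∈ W ↔ ∀ c : A, ⁅(c : L), v⁆ = χ₀ c • v := by
      intro v
      rw [hW, Submodule.mem_iInf]
      refine forall_congr' fun c => ?_
      rw [LinearMap.mem_ker, LinearMap.sub_apply, LinearMap.smul_apply,
        Module.End.one_apply, sub_eq_zero, toEnd_apply_apply]
    have hw₀W : w₀ ∈ W := (hmemW w₀).mpr hwe
    -- W is L-invariant, by the trace argument
    have hWinv : ∀ (y : L), ∀ v ∈ W, ⁅y, v⁆ ∈ W := by
      intro y v hv
      rw [hmemW]
      intro c
      set b : A := ⟨⁅(c : L), y⁆, hAI y _ c.2⟩ with hb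
      have hχb : χ₀ b = 0 :=
        trace_key A χ₀ w₀ hw₀ hwe y (fun c => hAI y _ c.2) b c rfl
      have hl : ⁅(c : L), ⁅y, v⁆⁆ = ⁅(b : L), v⁆ + ⁅y, ⁅(c : L), v⁆⁆ := by
        rw [hb]; exact leibniz_lie _ _ _
      rw [hl, (hmemW v).mp hv b, hχb, zero_smul, zero_add, (hmemW v).mp hv c,
        lie_smul]
    -- normalize x₀
    set x₁ : L := (φ x₀)⁻¹ • x₀ with hx₁
    have hφx₁ : φ x₁ = 1 := by
      rw [hx₁, map_smul, smul_eq_mul, inv_mul_cancel₀ hφx]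
    -- eigenvector of x₁ on W
    have hWx₁ : ∀ v ∈ W, (toEnd ℂ L M x₁) v ∈ W := by
      intro v hv
      rw [toEnd_apply_apply]
      exact hWinv x₁ v hv
    set e : Module.End ℂ W := (toEnd ℂ L M x₁).restrict hWx₁ with he
    haveI : Nontrivial W := Submodule.nontrivial_iff_ne_bot.mpr (by
      intro hbot
      rw [hbot, Submodule.mem_bot] at hw₀W
      exact hw₀ hw₀W)
    obtain ⟨c, hc⟩ := Module.End.exists_eigenvalue e
    obtain ⟨u, hu⟩ := hc.exists_hasEigenvector
    have hu0 : (u : M) ≠ 0 := fun h => hu.right (Subtype.ext h)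
    have hx₁u : ⁅x₁, (u : M)⁆ = c • (u : M) := by
      have h1 := hu.apply_eq_smul
      have h2 : ((e u : W) : M) = ((c • u : W) : M) := by rw [h1]
      rw [he, LinearMap.restrict_coe_apply, toEnd_apply_apply] at h2
      simpa using h2
    have hAu : ∀ a : A, ⁅(a : L), (u : M)⁆ = χ₀ a • (u : M) := (hmemW _).mp u.2
    -- build the weight on L
    set T : L →ₗ[ℂ] L := LinearMap.id - φ.smulRight x₁ with hT
    have hTval : ∀ y : L, T y = y - φ y • x₁ := fun y => rfl
    have hTmem : ∀ y : L, T y ∈ A.toSubmodule := by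
      intro y
      show φ (T y) = 0
      rw [hTval, map_sub, map_smul, hφx₁, smul_eq_mul, mul_one, sub_self]
    set πA : L →ₗ[ℂ] A := T.codRestrict A.toSubmodule hTmem with hπA
    have hπAval : ∀ y : L, ((πA y : A) : L) = y - φ y • x₁ := fun y => rfl
    refine ⟨χ₀.comp πA + c • φ, u, hu0, fun y => ?_⟩
    have hdec : y = ((πA y : A) : L) + φ y • x₁ := by
      show y = (y - φ y • x₁) + φ y • x₁
      abel
    calc ⁅y, (u : M)⁆ = ⁅((πA y : A) : L) + φ y • x₁, (u : M)⁆ := by rw [← hdec]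
      _ = ⁅((πA y : A) : L), (u : M)⁆ + φ y • ⁅x₁, (u : M)⁆ := by
          rw [add_lie, smul_lie]
      _ = χ₀ (πA y) • (u : M) + (φ y * c) • (u : M) := by
          rw [hAu (πA y), hx₁u, smul_smul]
      _ = ((χ₀.comp πA + c • φ) y) • (u : M) := by
          rw [← add_smul]
          congr 1
          simp only [LinearMap.add_apply, LinearMap.comp_apply, LinearMap.smul_apply,
            smul_eq_mul]
          ring

theorem flag_aux (L : Type u) [LieRing L] [LieAlgebra ℂ L]
    [FiniteDimensional ℂ L] [LieAlgebra.IsSolvable L] (n : ℕ) :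
    ∀ (M : Type v) [AddCommGroup M] [Module ℂ M] [LieRingModule L M] [LieModule ℂ L M]
    [FiniteDimensional ℂ M], Module.finrank ℂ M = n →
    ∃ (χ : Fin n → Module.Dual ℂ L), (∀ i (x y : L), χ i ⁅x, y⁆ = 0) ∧
      ∀ x : L, IsNilpotent (toEnd ℂ L M x) ↔ ∀ i, χ i x = 0 := by
  induction n with
  | zero =>
    intro M _ _ _ _ _ hM
    haveI : Subsingleton M := finrank_zero_iff.mp hM
    exact ⟨Fin.elim0, fun i => i.elim0, fun x =>
      ⟨fun _ i => i.elim0, fun _ => ⟨1, Subsingleton.elim _ _⟩⟩⟩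
  | succ n ih =>
    intro M _ _ _ _ _ hM
    haveI : Nontrivial M := finrank_pos_iff.mp (by rw [hM]; omega)
    obtain ⟨χ₁, v, hv, hve⟩ := lie_aux (Module.finrank ℂ L) L M le_rfl
    -- the line spanned by v is a Lie submodule
    set S : LieSubmodule ℂ L M :=
      { toSubmodule := (ℂ ∙ v)
        lie_mem := by
          intro x m hm
          have hm' : m ∈ (ℂ ∙ v) := hm
          obtain ⟨t, rfl⟩ := Submodule.mem_span_singleton.mp hm'
          show ⁅x, t • v⁆ ∈ (ℂ ∙ v)
          exact Submodule.mem_span_singleton.mpr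
            ⟨t * χ₁ x, by rw [lie_smul, hve, smul_smul]⟩ } with hS
    have hfrS : finrank ℂ S.toSubmodule = 1 := finrank_span_singleton hv
    have hfrQ : finrank ℂ (M ⧸ S) = n := by
      have h := Submodule.finrank_quotient_add_finrank S.toSubmodule
      have h2 : finrank ℂ (M ⧸ S) = finrank ℂ (M ⧸ S.toSubmodule) := rfl
      omega
    obtain ⟨χs, hχs_lie, hχs⟩ := ih (M ⧸ S) hfrQ
    set π := LieSubmodule.Quotient.mk' S with hπ
    have hπsurj : Function.Surjective π := LieSubmodule.Quotient.surjective_mk' S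
    have hcomm : ∀ (x : L) (k : ℕ) (m : M),
        ((toEnd ℂ L (M ⧸ S) x) ^ k) (π m) = π (((toEnd ℂ L M x) ^ k) m) := by
      intro x k
      induction k with
      | zero => intro m; simp
      | succ k ihk =>
        intro m
        rw [pow_succ', pow_succ', Module.End.mul_apply, Module.End.mul_apply, ihk]
        have h := LieSubmodule.Quotient.toEnd_comp_mk' (R := ℂ) (N := S) x
        exact (LinearMap.congr_fun h _)
    have hvpow : ∀ (x : L) (k : ℕ), ((toEnd ℂ L M x) ^ k) v = χ₁ x ^ k • v := by
      intro x k
      induction k with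
      | zero => simp
      | succ k ihk =>
        rw [pow_succ', Module.End.mul_apply, ihk, map_smul, toEnd_apply_apply, hve,
          smul_smul, pow_succ', mul_comm]
    refine ⟨Fin.cons χ₁ χs, ?_, ?_⟩
    · intro i x y
      refine Fin.cases ?_ (fun j => ?_) i
      · rw [Fin.cons_zero]
        have h1 : χ₁ ⁅x, y⁆ • v = (0 : M) := by
          rw [← hve, lie_lie, hve, hve, lie_smul, lie_smul, hve, hve, smul_smul,
            smul_smul, mul_comm, sub_self]
        exact (smul_eq_zero.mp h1).resolve_right hv
      · rw [Fin.cons_succ]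
        exact hχs_lie j x y
    · intro x
      constructor
      · rintro ⟨k, hk⟩
        refine Fin.cases ?_ (fun j => ?_)
        · rw [Fin.cons_zero]
          have h1 : ((toEnd ℂ L M x) ^ k) v = 0 := by rw [hk]; rfl
          rw [hvpow] at h1
          have h2 := (smul_eq_zero.mp h1).resolve_right hv
          exact (pow_eq_zero_iff'.mp h2).1
        · rw [Fin.cons_succ]
          refine (hχs x).mp ⟨k, ?_⟩ j
          ext q
          obtain ⟨m, rfl⟩ := hπsurj q
          rw [hcomm, hk]
          simp
      · intro h
        have hχ₁x : χ₁ x = 0 := by simpa using h 0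
        have hrest : ∀ j, χs j x = 0 := fun j => by simpa using h j.succ
        obtain ⟨k, hk⟩ := (hχs x).mpr hrest
        refine ⟨k + 1, ?_⟩
        ext m
        have h1 : π (((toEnd ℂ L M x) ^ k) m) = 0 := by
          rw [← hcomm, hk]; rfl
        rw [LieSubmodule.Quotient.mk_eq_zero] at h1
        have h2 : (toEnd ℂ L M x) (((toEnd ℂ L M x) ^ k) m) = 0 := by
          have hmem : ((toEnd ℂ L M x) ^ k) m ∈ (ℂ ∙ v) := h1
          rw [Submodule.mem_span_singleton] at hmem
          obtain ⟨t, ht⟩ := hmem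
          rw [← ht, map_smul, toEnd_apply_apply, hve, hχ₁x, zero_smul, smul_zero]
        rw [pow_succ', Module.End.mul_apply, h2]
        simp

/-- If `𝔤` is a finite-dimensional solvable complex Lie algebra and `𝔫` its
nilradical (the maximal nilpotent ideal), then `dim 𝔫 ≥ (1/2) dim 𝔤`. -/
theorem stmt_9 (L : Type*) [LieRing L] [LieAlgebra ℂ L]
    [FiniteDimensional ℂ L] [LieAlgebra.IsSolvable L]
    (N : LieIdeal ℂ L)
    (hN : LieRing.IsNilpotent N)
    (hmax : ∀ I : LieIdeal ℂ L, LieRing.IsNilpotent I → I ≤ N) :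
    Module.finrank ℂ L ≤ 2 * Module.finrank ℂ N := by
  classical
  set D : LieIdeal ℂ L := LieAlgebra.derivedSeries ℂ L 1 with hD
  have hDtop : D = ⁅(⊤ : LieIdeal ℂ L), (⊤ : LieIdeal ℂ L)⁆ := by
    rw [hD, LieAlgebra.derivedSeries_def]; rfl
  have hder : ∀ u v : L, ⁅u, v⁆ ∈ D := by
    intro u v
    rw [hDtop]
    exact LieSubmodule.lie_mem_lie (LieSubmodule.mem_top u) (LieSubmodule.mem_top v)
  set n := finrank ℂ D with hn
  obtain ⟨χ, hχlie, hχ⟩ := flag_aux L n D rfl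
  -- the candidate nilpotent ideal
  set I : LieIdeal ℂ L :=
    { toSubmodule := ⨅ i, LinearMap.ker (χ i)
      lie_mem := by
        intro x m _
        show ⁅x, m⁆ ∈ ⨅ i, LinearMap.ker (χ i)
        rw [Submodule.mem_iInf]
        intro i
        exact hχlie i x m } with hI
  have hmemI : ∀ z : L, z ∈ I ↔ ∀ i, χ i z = 0 := by
    intro z
    show z ∈ (⨅ i, LinearMap.ker (χ i)) ↔ _
    rw [Submodule.mem_iInf]
    exact forall_congr' fun i => LinearMap.mem_ker
  have hDI : D ≤ I := by
    rw [hDtop, LieSubmodule.lieIdeal_oper_eq_span]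
    rw [LieSubmodule.lieSpan_le]
    rintro z ⟨x, m, rfl⟩
    exact (hmemI _).mpr fun i => hχlie i _ _
  -- I is a nilpotent Lie algebra
  have hInil : LieRing.IsNilpotent I := by
    rw [LieAlgebra.isNilpotent_iff_forall (R := ℂ)]
    intro y
    obtain ⟨k, hk⟩ := (hχ (y : L)).mpr ((hmemI (y : L)).mp y.2)
    refine ⟨k + 1, ?_⟩
    have hcoeD : ∀ (j : ℕ) (d : D),
        ((((toEnd ℂ L D (y : L)) ^ j) d : D) : L) =
          ((LieAlgebra.ad ℂ L (y : L)) ^ j) (d : L) := by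
      intro j
      induction j with
      | zero => intro d; simp
      | succ j ihj =>
        intro d
        rw [pow_succ', pow_succ', Module.End.mul_apply, Module.End.mul_apply]
        have hstep : (((toEnd ℂ L D (y : L)) (((toEnd ℂ L D (y : L)) ^ j) d)) : L) =
            (LieAlgebra.ad ℂ L (y : L)) ((((toEnd ℂ L D (y : L)) ^ j) d : D) : L) := rfl
        rw [hstep, ihj d]
    have hcoeI : ∀ (j : ℕ) (z : I),
        ((((LieAlgebra.ad ℂ I y) ^ j) z : I) : L) =
          ((LieAlgebra.ad ℂ L (y : L)) ^ j) (z : L) := by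
      intro j
      induction j with
      | zero => intro z; simp
      | succ j ihj =>
        intro z
        rw [pow_succ', pow_succ', Module.End.mul_apply, Module.End.mul_apply]
        have hstep : (((LieAlgebra.ad ℂ I y) (((LieAlgebra.ad ℂ I y) ^ j) z)) : L) =
            (LieAlgebra.ad ℂ L (y : L)) ((((LieAlgebra.ad ℂ I y) ^ j) z : I) : L) := rfl
        rw [hstep, ihj z]
    ext z
    simp only [LinearMap.zero_apply, ZeroMemClass.coe_zero]
    rw [hcoeI (k + 1) z, pow_succ, Module.End.mul_apply]
    have h1 : (LieAlgebra.ad ℂ L (y : L)) (z : L) = ⁅(y : L), (z : L)⁆ := rfl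
    rw [h1]
    set d : D := ⟨⁅(y : L), (z : L)⁆, hder _ _⟩ with hd
    have h2 : ((LieAlgebra.ad ℂ L (y : L)) ^ k) ((d : D) : L) = 0 := by
      rw [← hcoeD k d, hk]
      simp
    exact h2
  have hIN : I ≤ N := hmax I hInil
  have hDN : D ≤ N := le_trans hDI hIN
  -- dimension count
  set Λ : L →ₗ[ℂ] (Fin n → ℂ) := LinearMap.pi χ with hΛ
  have hker : LinearMap.ker Λ = I.toSubmodule := by
    rw [hΛ, LinearMap.ker_pi]
  have h1 := LinearMap.finrank_range_add_finrank_ker Λ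
  have h2 : finrank ℂ (LinearMap.range Λ) ≤ n := by
    have := Submodule.finrank_le (LinearMap.range Λ)
    rwa [Module.finrank_fin_fun] at this
  have h3 : finrank ℂ (LinearMap.ker Λ) = finrank ℂ I := by rw [hker]; rfl
  have h4 : finrank ℂ I ≤ finrank ℂ N := Submodule.finrank_mono hIN
  have h5 : n ≤ finrank ℂ N := by
    rw [hn]
    exact Submodule.finrank_mono hDN
  omega
end

section
/- Let G be a locally compact group, H a closed normal subgroup, Γ a discrete subgroup of G, and π : G → G/H the quotient map. If Γ ∩ H is cocompact in H and Γ is cocompact in G, then ΓH = HΓ is a closed subgroup of G and π(Γ) is a discrete cocompact subgroup of G/H. -/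
open Set Filter
open scoped Pointwise

lemma exists_compact_image_univ {X Y : Type*} [TopologicalSpace X] [TopologicalSpace Y]
    [WeaklyLocallyCompactSpace X] [CompactSpace Y] {f : X → Y}
    (hopen : IsOpenMap f) (hsurj : Function.Surjective f) :
    ∃ K : Set X, IsCompact K ∧ f '' K = Set.univ := by
  choose C hC hCx using fun x : X => exists_compact_mem_nhds x
  have hcover : (Set.univ : Set Y) ⊆ ⋃ x, f '' interior (C x) := by
    intro y _
    obtain ⟨x, rfl⟩ := hsurj y
    exact Set.mem_iUnion.2 ⟨x, Set.mem_image_of_mem f (mem_interior_iff_mem_nhds.2 (hCx x))⟩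
  obtain ⟨t, ht⟩ := isCompact_univ.elim_finite_subcover (fun x => f '' interior (C x))
    (fun x => hopen _ isOpen_interior) hcover
  refine ⟨⋃ x ∈ t, C x, t.isCompact_biUnion fun x _ => hC x, ?_⟩
  apply Set.eq_univ_of_univ_subset
  intro y hy
  obtain ⟨x, hxt, hyx⟩ := Set.mem_iUnion₂.1 (ht hy)
  obtain ⟨z, hz, rfl⟩ := hyx
  exact ⟨z, Set.mem_biUnion hxt (interior_subset hz), rfl⟩

/-- Let `G` be a locally compact topological group, `H` a closed normal subgroup,
`Γ` a discrete subgroup, and `π : G → G/H` the quotient map. If `Γ ∩ H` is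
cocompact in `H` and `Γ` is cocompact in `G`, then `ΓH = HΓ` is a closed subset
of `G` and `π(Γ)` is a discrete cocompact subgroup of `G/H`. -/
theorem stmt_18 (G : Type*) [Group G] [TopologicalSpace G] [IsTopologicalGroup G]
    [LocallyCompactSpace G]
    (H : Subgroup G) [H.Normal] (hHclosed : IsClosed (H : Set G))
    (Γ : Subgroup G) [DiscreteTopology Γ]
    (hΓH : CompactSpace (H ⧸ Γ.subgroupOf H))
    (hΓ : CompactSpace (G ⧸ Γ)) :
    (Γ : Set G) * (H : Set G) = (H : Set G) * (Γ : Set G) ∧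
    IsClosed ((Γ : Set G) * (H : Set G)) ∧
    DiscreteTopology ↥(Γ.map (QuotientGroup.mk' H)) ∧
    CompactSpace ((G ⧸ H) ⧸ Γ.map (QuotientGroup.mk' H)) := by
  haveI : IsClosed (H : Set G) := hHclosed
  -- part (a)
  have hcomm : (Γ : Set G) * (H : Set G) = (H : Set G) * (Γ : Set G) := by
    rw [← Subgroup.mul_normal, ← Subgroup.normal_mul, sup_comm]
  -- compact set K' ⊆ H with H = K' * (Γ ∩ H)
  haveI : WeaklyLocallyCompactSpace ↥H := hHclosed.weaklyLocallyCompactSpace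
  obtain ⟨K, hKcomp, hKim⟩ := exists_compact_image_univ
    (f := (QuotientGroup.mk : ↥H → ↥H ⧸ Γ.subgroupOf H))
    QuotientGroup.isOpenQuotientMap_mk.isOpenMap QuotientGroup.isOpenQuotientMap_mk.surjective
  set K' : Set G := ((↑) : ↥H → G) '' K with hK'def
  have hK'comp : IsCompact K' := hKcomp.image continuous_subtype_val
  have hK'H : K' ⊆ (H : Set G) := by rintro _ ⟨k, -, rfl⟩; exact k.2
  have hHdec : ∀ h ∈ H, ∃ k ∈ K', ∃ c, c ∈ Γ ∧ c ∈ H ∧ h = k * c := by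
    intro h hh
    have : (QuotientGroup.mk (⟨h, hh⟩ : ↥H) : ↥H ⧸ Γ.subgroupOf H) ∈
        QuotientGroup.mk '' K := by rw [hKim]; trivial
    obtain ⟨k, hkK, hk⟩ := this
    have hmem : k⁻¹ * ⟨h, hh⟩ ∈ Γ.subgroupOf H := QuotientGroup.eq.1 hk
    refine ⟨(k : G), ⟨k, hkK, rfl⟩, (k : G)⁻¹ * h, ?_, ?_, ?_⟩
    · exact (Subgroup.mem_subgroupOf).1 hmem
    · exact H.mul_mem (H.inv_mem k.2) hh
    · group
  -- the key neighborhood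
  have key : ∃ U ∈ nhds (1 : G), ∀ x ∈ U, x ∈ (H : Set G) * (Γ : Set G) → x ∈ H := by
    by_contra hcon
    push_neg at hcon
    set S : Set G := ((H : Set G) * (Γ : Set G)) \ (H : Set G) with hSdef
    have hclos : (1 : G) ∈ closure S := by
      rw [mem_closure_iff_nhds]
      intro t ht
      obtain ⟨x, hxt, hxm, hxH⟩ := hcon t ht
      exact ⟨x, hxt, hxm, hxH⟩
    have hS : ∀ x : G, ∃ k c : G, x ∈ S → k ∈ K' ∧ c ∈ Γ ∧ c ∉ H ∧ x = k * c := by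
      intro x
      by_cases hx : x ∈ S
      · obtain ⟨hxm, hxH⟩ := hx
        rw [Set.mem_mul] at hxm
        obtain ⟨h, hhH, c0, hc0, hxeq⟩ := hxm
        obtain ⟨k, hkK', c1, hc1Γ, hc1H, hheq⟩ := hHdec h hhH
        have hre : x = k * (c1 * c0) := by rw [← hxeq, hheq, mul_assoc]
        refine ⟨k, c1 * c0, fun _ => ⟨hkK', Γ.mul_mem hc1Γ hc0, ?_, hre⟩⟩
        intro hmem
        exact hxH (by rw [hre]; exact H.mul_mem (hK'H hkK') hmem)
      · exact ⟨1, 1, fun h => absurd h hx⟩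
    choose κ cf hfun using hS
    have hne : (nhds (1 : G) ⊓ 𝓟 S).NeBot := mem_closure_iff_clusterPt.1 hclos
    obtain ⟨F, hF⟩ := Filter.exists_ultrafilter_le (nhds (1 : G) ⊓ 𝓟 S)
    have hF1 : (F : Filter G) ≤ nhds 1 := hF.trans inf_le_left
    have hFS : S ∈ F := le_principal_iff.1 (hF.trans inf_le_right)
    have hκK : ∀ᶠ x in (F : Filter G), κ x ∈ K' :=
      Filter.eventually_of_mem hFS fun x hx => (hfun x hx).1
    have hmapK : (Ultrafilter.map κ F : Filter G) ≤ 𝓟 K' := by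
      rw [Ultrafilter.coe_map, le_principal_iff, mem_map]
      exact hκK
    obtain ⟨k, hkK', hkle⟩ := hK'comp.ultrafilter_le_nhds (Ultrafilter.map κ F) hmapK
    have hκ : Tendsto κ (F : Filter G) (nhds k) := by rwa [Ultrafilter.coe_map] at hkle
    have htc : Tendsto cf (F : Filter G) (nhds k⁻¹) := by
      have h1 : Tendsto (fun x => (κ x)⁻¹ * x) (F : Filter G) (nhds (k⁻¹ * 1)) :=
        (hκ.inv).mul hF1
      rw [mul_one] at h1
      refine h1.congr' ?_
      filter_upwards [hFS] with x hx
      obtain ⟨-, -, -, hxeq⟩ := hfun x hx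
      exact (eq_inv_mul_iff_mul_eq.2 hxeq.symm).symm
    obtain ⟨V, hV1, hVΓ⟩ := nhds_inter_eq_singleton_of_mem_discrete
      (isDiscrete_iff_discreteTopology.mpr ‹DiscreteTopology Γ›) Γ.one_mem
    have hdiv : Tendsto (fun p : G × G => cf p.1 * (cf p.2)⁻¹)
        ((F : Filter G) ×ˢ (F : Filter G)) (nhds 1) := by
      have := (htc.comp tendsto_fst).mul ((htc.comp tendsto_snd).inv)
      simpa using this
    have hevV : ∀ᶠ p in (F : Filter G) ×ˢ (F : Filter G), cf p.1 * (cf p.2)⁻¹ ∈ V :=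
      hdiv hV1
    have hevS : ∀ᶠ p in (F : Filter G) ×ˢ (F : Filter G), p.1 ∈ S ∧ p.2 ∈ S := by
      have := Filter.prod_mem_prod hFS hFS
      filter_upwards [this] with p hp using hp
    have heq : ∀ᶠ p in (F : Filter G) ×ˢ (F : Filter G), cf p.1 = cf p.2 := by
      filter_upwards [hevV, hevS] with p hpV hpS
      have hΓmem : cf p.1 * (cf p.2)⁻¹ ∈ (Γ : Set G) :=
        Γ.mul_mem (hfun p.1 hpS.1).2.1 (Γ.inv_mem (hfun p.2 hpS.2).2.1)
      have : cf p.1 * (cf p.2)⁻¹ ∈ V ∩ (Γ : Set G) := ⟨hpV, hΓmem⟩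
      rw [hVΓ] at this
      exact mul_inv_eq_one.1 this
    rw [eventually_prod_iff] at heq
    obtain ⟨pa, hpa, pb, hpb, hpq⟩ := heq
    obtain ⟨x₀, hx₀a, hx₀b, hx₀S⟩ :=
      (hpa.and (hpb.and (Filter.eventually_of_mem hFS fun _ h => h))).exists
    set c := cf x₀ with hcdef
    have hconst : ∀ᶠ x in (F : Filter G), cf x = c := by
      filter_upwards [hpb] with x hx using (hpq hx₀a hx).symm
    have htconst : Tendsto (fun _ : G => c) (F : Filter G) (nhds k⁻¹) := htc.congr' hconst
    have hcinW : ∀ W ∈ nhds k⁻¹, c ∈ W := by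
      intro W hW
      by_contra hc
      have h2 : (fun _ : G => c) ⁻¹' W ∈ (F : Filter G) := htconst hW
      have h3 : ((fun _ : G => c) ⁻¹' W) = ∅ := by ext; simp [hc]
      rw [h3] at h2
      exact Filter.empty_notMem _ h2
    have hkc : k⁻¹ ∈ closure ({c} : Set G) := by
      rw [mem_closure_iff_nhds]
      exact fun t ht => ⟨c, hcinW t ht, rfl⟩
    have hclosc : closure ({c} : Set G) = c • closure ({1} : Set G) := by
      rw [← closure_smul, smul_set_singleton, smul_eq_mul, mul_one]
    have hN : closure ({1} : Set G) ⊆ (H : Set G) := by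
      have : ({1} : Set G) ⊆ (H : Set G) := by simp [H.one_mem]
      simpa [hHclosed.closure_eq] using closure_mono this
    rw [hclosc] at hkc
    obtain ⟨n, hn, hkn⟩ := hkc
    have hnH : n ∈ H := hN hn
    have hcH : c ∈ H := by
      have hk : (k : G) ∈ H := hK'H hkK'
      have : c = k⁻¹ * n⁻¹ := by
        have : c * n = k⁻¹ := by simpa [smul_eq_mul] using hkn
        rw [← this]; group
      rw [this]
      exact H.mul_mem (H.inv_mem hk) (H.inv_mem hnH)
    exact (hfun x₀ hx₀S).2.2.1 hcH
  -- extract an open set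
  obtain ⟨U, hU, hUkey⟩ := key
  obtain ⟨U', hU'U, hU'open, hU'1⟩ := mem_nhds_iff.1 hU
  -- discreteness of the image
  set Sig := Γ.map (QuotientGroup.mk' H) with hSgdef
  set W : Set (G ⧸ H) := QuotientGroup.mk '' U' with hWdef
  have hWopen : IsOpen W := QuotientGroup.isOpenQuotientMap_mk.isOpenMap U' hU'open
  have hWSg : W ∩ (Sig : Set (G ⧸ H)) = {1} := by
    apply Set.eq_singleton_iff_unique_mem.2
    constructor
    · exact ⟨⟨1, hU'1, rfl⟩, Sig.one_mem⟩
    · rintro y ⟨⟨u, huU', rfl⟩, hySg⟩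
      obtain ⟨γ, hγΓ, hγeq⟩ := hySg
      have : (QuotientGroup.mk γ : G ⧸ H) = QuotientGroup.mk u := hγeq
      have hmem : γ⁻¹ * u ∈ H := QuotientGroup.eq.1 this
      have huΓH : u ∈ (H : Set G) * (Γ : Set G) := by
        rw [← hcomm]
        exact ⟨γ, hγΓ, γ⁻¹ * u, hmem, by group⟩
      have huH : u ∈ H := hUkey u (hU'U huU') huΓH
      exact (QuotientGroup.eq_one_iff u).2 huH
  haveI hdisc : DiscreteTopology ↥Sig := by
    apply discreteTopology_of_isOpen_singleton_one
    have : ({1} : Set ↥Sig) = ((↑) : ↥Sig → G ⧸ H) ⁻¹' W := by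
      ext x
      simp only [Set.mem_singleton_iff, Set.mem_preimage]
      constructor
      · rintro rfl; exact ⟨1, hU'1, rfl⟩
      · intro hx
        have : (x : G ⧸ H) ∈ W ∩ (Sig : Set (G ⧸ H)) := ⟨hx, x.2⟩
        rw [hWSg] at this
        exact Subtype.ext this
    rw [this]
    exact hWopen.preimage continuous_subtype_val
  -- closedness
  have hSgclosed : IsClosed (Sig : Set (G ⧸ H)) := Subgroup.isClosed_of_discrete
  have hpre : ((Γ : Set G) * (H : Set G)) = (QuotientGroup.mk' H) ⁻¹' (Sig : Set (G ⧸ H)) := by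
    rw [← Subgroup.mul_normal, ← Subgroup.coe_comap, hSgdef, Subgroup.comap_map_eq,
      QuotientGroup.ker_mk']
  have hclosedΓH : IsClosed ((Γ : Set G) * (H : Set G)) := by
    rw [hpre]
    exact hSgclosed.preimage (QuotientGroup.isOpenQuotientMap_mk.continuous)
  -- cocompactness of the image
  have hcompact : CompactSpace ((G ⧸ H) ⧸ Sig) := by
    obtain ⟨K₀, hK₀, hK₀im⟩ := exists_compact_image_univ
      (f := (QuotientGroup.mk : G → G ⧸ Γ))
      QuotientGroup.isOpenQuotientMap_mk.isOpenMap QuotientGroup.isOpenQuotientMap_mk.surjective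
    rw [← isCompact_univ_iff]
    have himg : (fun g : G => (QuotientGroup.mk (QuotientGroup.mk g : G ⧸ H) : (G ⧸ H) ⧸ Sig)) ''
        K₀ = Set.univ := by
      apply Set.eq_univ_of_univ_subset
      intro z _
      obtain ⟨q, rfl⟩ := QuotientGroup.mk_surjective z
      obtain ⟨g, rfl⟩ := QuotientGroup.mk_surjective q
      have : (QuotientGroup.mk g : G ⧸ Γ) ∈ QuotientGroup.mk '' K₀ := by rw [hK₀im]; trivial
      obtain ⟨x, hxK₀, hx⟩ := this
      refine ⟨x, hxK₀, ?_⟩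
      have hγ : x⁻¹ * g ∈ Γ := QuotientGroup.eq.1 hx
      apply QuotientGroup.eq.2
      show (QuotientGroup.mk x : G ⧸ H)⁻¹ * QuotientGroup.mk g ∈ Sig
      rw [hSgdef]
      exact ⟨x⁻¹ * g, hγ, by simp [QuotientGroup.mk_mul, QuotientGroup.mk_inv]⟩
    rw [← himg]
    exact hK₀.image ((QuotientGroup.isOpenQuotientMap_mk.continuous).comp
      (QuotientGroup.isOpenQuotientMap_mk.continuous))
  exact ⟨hcomm, hclosedΓH, hdisc, hcompact⟩
end
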